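/- Let Φ : ℝ → H be twice continuously differentiable with ‖Φ(τ)‖ = 1 for all τ and gauge ⟨Φ(τ), Φ'(τ)⟩ = 0 for all τ. Fix τ with v(τ) := ‖Φ'(τ)‖ > 0, let Q = id − P where P x = ⟨Φ(τ), x⟩ Φ(τ). Then v is differentiable at τ with v'(τ) = Re⟨Φ'(τ), Φ''(τ)⟩ / v(τ), and the following Pythagorean decomposition holds: ‖Q Φ''(τ)‖² = v'(τ)² + ‖Q Φ''(τ) − (v'(τ)/v(τ)) Φ'(τ)‖². (The second term equals κ(τ)² v(τ)⁴, where κ is the geodesic curvature of the arc-length reparametrization of the path, so that ‖Q Φ̈ P‖ = √(v̇² + κ² v⁴).) -/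

import Mathlib

open scoped ComplexInnerProductSpace

/-- Let `Φ : ℝ → H` be twice continuously differentiable with
`‖Φ t‖ = 1` and gauge `⟪Φ t, Φ' t⟫ = 0` for all `t`. Fix `τ` with speed
`v τ = ‖Φ' τ‖ > 0`, and let `Q = id − P` with `P x = ⟪Φ τ, x⟫ Φ τ`. Then `v` is
differentiable at `τ` with derivative `v'(τ) = Re⟪Φ' τ, Φ'' τ⟫ / v τ`, and the
Pythagorean decomposition
`‖Q Φ''(τ)‖² = v'(τ)² + ‖Q Φ''(τ) − (v'(τ)/v(τ)) Φ'(τ)‖²` holds. -/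
theorem speed_derivative_and_pythagorean_decomposition
    {H : Type*} [NormedAddCommGroup H] [InnerProductSpace ℂ H]
    (Φ : ℝ → H) (hΦ : ContDiff ℝ 2 Φ)
    (hnorm : ∀ t, ‖Φ t‖ = 1)
    (hgauge : ∀ t, ⟪Φ t, deriv Φ t⟫ = 0)
    (τ : ℝ)
    (v : ℝ → ℝ) (hv : ∀ t, v t = ‖deriv Φ t‖)
    (hvpos : 0 < v τ)
    (Q : H → H) (hQ : ∀ x, Q x = x - ⟪Φ τ, x⟫ • Φ τ)
    (vd : ℝ)
    (hvd : vd = (⟪deriv Φ τ, deriv (deriv Φ) τ⟫).re / v τ) :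
    HasDerivAt v vd τ ∧
      ‖Q (deriv (deriv Φ) τ)‖ ^ 2
        = vd ^ 2 + ‖Q (deriv (deriv Φ) τ) - (vd / v τ) • deriv Φ τ‖ ^ 2 := by
  have hvτ : v τ = ‖deriv Φ τ‖ := hv τ
  have hvne : v τ ≠ 0 := ne_of_gt hvpos
  constructor
  · -- derivative of the speed
    letI : InnerProductSpace ℝ H := InnerProductSpace.complexToReal
    have h2 : ContDiff ℝ (1 + 1 : ℕ) Φ := by exact_mod_cast hΦ
    have hfd : ContDiff ℝ 1 (deriv Φ) := (contDiff_succ_iff_deriv.mp h2).2.2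
    have hder : HasDerivAt (deriv Φ) (deriv (deriv Φ) τ) τ :=
      ((hfd.differentiable one_ne_zero) τ).hasDerivAt
    have hsq : HasDerivAt (fun t => ‖deriv Φ t‖ ^ 2)
        (2 * Inner.inner (𝕜 := ℝ) (deriv Φ τ) (deriv (deriv Φ) τ)) τ := hder.norm_sq
    have hnz : ‖deriv Φ τ‖ ^ 2 ≠ 0 := by
      rw [← hvτ]; positivity
    have hs := hsq.sqrt hnz
    have hval : ∀ t, v t = Real.sqrt (‖deriv Φ t‖ ^ 2) := by
      intro t; rw [hv t, Real.sqrt_sq (norm_nonneg _)]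
    have hfun : v = fun t => Real.sqrt (‖deriv Φ t‖ ^ 2) := funext hval
    rw [hfun]
    convert hs using 1
    have hre : Inner.inner (𝕜 := ℝ) (deriv Φ τ) (deriv (deriv Φ) τ)
        = (⟪deriv Φ τ, deriv (deriv Φ) τ⟫).re := rfl
    rw [hre, Real.sqrt_sq (norm_nonneg _), ← hvτ, hvd]
    field_simp
  · -- Pythagorean decomposition
    set A := Q (deriv (deriv Φ) τ) with hA
    set u := deriv Φ τ with hu
    set c := vd / v τ with hc
    have huΦ : ⟪u, Φ τ⟫ = 0 := by
      rw [← inner_conj_symm, hgauge τ, map_zero]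
    have hreuA : (⟪u, A⟫).re = (⟪u, deriv (deriv Φ) τ⟫).re := by
      rw [hA, hQ, inner_sub_right, inner_smul_right, huΦ, mul_zero, sub_zero]
    have hnu : ‖u‖ = v τ := hvτ.symm
    have hre' : (⟪u, deriv (deriv Φ) τ⟫).re = vd * v τ := by
      rw [hvd]; field_simp
    have key : (⟪u, A⟫).re = c * ‖u‖ ^ 2 := by
      rw [hreuA, hre', hnu, hc]; field_simp
    have hsm : (c • u : H) = ((c : ℂ)) • u := by
      simp [Complex.coe_smul]
    have hinner : ⟪A - c • u, c • u⟫ = (c : ℂ) * ⟪A, u⟫ - (c : ℂ) * (c : ℂ) * ⟪u, u⟫ := by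
      rw [hsm, inner_smul_right, inner_sub_left, inner_smul_left, Complex.conj_ofReal]
      ring
    have hreAu : (⟪A, u⟫).re = (⟪u, A⟫).re := by
      rw [← inner_conj_symm u A, Complex.conj_re]
    have huu : ⟪u, u⟫ = ((‖u‖ : ℂ)) ^ 2 := by
      exact inner_self_eq_norm_sq_to_K u
    have hcross : (⟪A - c • u, c • u⟫).re = 0 := by
      rw [hinner, huu, Complex.sub_re]
      have e1 : ((c : ℂ) * ⟪A, u⟫).re = c * (⟪A, u⟫).re := by
        simp [Complex.mul_re]
      have e2 : ((c : ℂ) * (c : ℂ) * ((‖u‖ : ℂ)) ^ 2).re = c * c * ‖u‖ ^ 2 := by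
        simp [← Complex.ofReal_pow, ← Complex.ofReal_mul]
      rw [e1, e2, hreAu, key]; ring
    have hsplit : A = (A - c • u) + c • u := by abel
    have hexp : ‖A‖ ^ 2 = ‖A - c • u‖ ^ 2 + 2 * (⟪A - c • u, c • u⟫).re + ‖c • u‖ ^ 2 := by
      conv_lhs => rw [hsplit]
      exact norm_add_sq (𝕜 := ℂ) (A - c • u) (c • u)
    have hcn : ‖c • u‖ ^ 2 = vd ^ 2 := by
      rw [norm_smul, mul_pow, hnu]
      simp only [Real.norm_eq_abs, sq_abs, hc]
      field_simp
    rw [hexp, hcross, hcn]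
    ring
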